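/- The rank-k truncation of the SVD gives the best rank-k approximation in Frobenius norm: if X = UΣVᵀ with singular values σ₁ ≥ σ₂ ≥ …, then for any matrix B of rank at most k, ‖X − B‖_F² ≥ Σ_{i>k} σᵢ², with equality attained by X̃ = U_k Σ_k V_kᵀ (Eckart–Young). -/

import Mathlib

open Matrix Finset

-- Frobenius norm squared as trace
lemma frob_eq_trace {n p : ℕ} (M : Matrix (Fin n) (Fin p) ℝ) :
    ∑ i, ∑ j, (M i j) ^ 2 = (Mᵀ * M).trace := by
  rw [Matrix.trace]
  rw [Finset.sum_comm]
  simp [Matrix.mul_apply, Matrix.diag, sq]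

-- orthogonal invariance
lemma frob_conj {n p : ℕ} (U : Matrix (Fin n) (Fin n) ℝ) (V : Matrix (Fin p) (Fin p) ℝ)
    (hU : Uᵀ * U = 1) (hV : Vᵀ * V = 1) (M : Matrix (Fin n) (Fin p) ℝ) :
    ∑ i, ∑ j, ((U * M * Vᵀ) i j) ^ 2 = ∑ i, ∑ j, (M i j) ^ 2 := by
  have hV' : V * Vᵀ = 1 := mul_eq_one_comm.mp hV
  rw [frob_eq_trace, frob_eq_trace]
  have : (U * M * Vᵀ)ᵀ * (U * M * Vᵀ) = V * ((Mᵀ * M) * Vᵀ) := by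
    simp only [Matrix.transpose_mul, Matrix.transpose_transpose]
    calc V * (Mᵀ * Uᵀ) * (U * M * Vᵀ) = V * (Mᵀ * ((Uᵀ * U) * (M * Vᵀ))) := by
          simp only [Matrix.mul_assoc]
      _ = V * ((Mᵀ * M) * Vᵀ) := by rw [hU, Matrix.one_mul, Matrix.mul_assoc]
  rw [this, Matrix.trace_mul_comm, Matrix.mul_assoc, hV, Matrix.mul_one]

-- minimization lemma
lemma min_lemma (P K : ℕ) (s t : ℕ → ℝ)
    (hs : ∀ i j, i ≤ j → s j ≤ s i) (hs0 : ∀ i, 0 ≤ s i)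
    (ht0 : ∀ i, 0 ≤ t i) (ht1 : ∀ i, t i ≤ 1)
    (hsum : (P : ℝ) - K ≤ ∑ i ∈ range P, t i) :
    ∑ i ∈ Ico K P, s i ≤ ∑ i ∈ range P, s i * t i := by
  rcases le_or_gt P K with h | h
  · rw [Finset.Ico_eq_empty (by omega)]
    simp only [Finset.sum_empty]
    exact Finset.sum_nonneg fun i _ => mul_nonneg (hs0 i) (ht0 i)
  · have hsplit : range P = range K ∪ Ico K P := by
      rw [Finset.range_eq_Ico, Finset.range_eq_Ico, Finset.Ico_union_Ico_eq_Ico (Nat.zero_le _) h.le]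
    have hdisj : Disjoint (range K) (Ico K P) := by
      rw [Finset.range_eq_Ico]
      exact Finset.Ico_disjoint_Ico_consecutive 0 K P
    rw [hsplit, Finset.sum_union hdisj] at hsum
    rw [hsplit, Finset.sum_union hdisj]
    have key : ∑ i ∈ Ico K P, s i * (1 - t i) ≤ ∑ i ∈ range K, s i * t i := by
      have h1 : ∑ i ∈ Ico K P, s i * (1 - t i) ≤ ∑ i ∈ Ico K P, s K * (1 - t i) := by
        apply Finset.sum_le_sum
        intro i hi
        exact mul_le_mul_of_nonneg_right (hs K i (Finset.mem_Ico.mp hi).1)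
          (by linarith [ht1 i])
      have h2 : ∑ i ∈ range K, s K * t i ≤ ∑ i ∈ range K, s i * t i := by
        apply Finset.sum_le_sum
        intro i hi
        exact mul_le_mul_of_nonneg_right (hs i K (Finset.mem_range.mp hi).le) (ht0 i)
      have h3 : ∑ i ∈ Ico K P, s K * (1 - t i) ≤ ∑ i ∈ range K, s K * t i := by
        rw [← Finset.mul_sum, ← Finset.mul_sum]
        apply mul_le_mul_of_nonneg_left _ (hs0 K)
        have hcard : (Ico K P).card = P - K := Nat.card_Ico K P
        have : ∑ i ∈ Ico K P, (1 - t i) = ((P:ℝ) - K) - ∑ i ∈ Ico K P, t i := by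
          rw [Finset.sum_sub_distrib, Finset.sum_const, hcard, nsmul_eq_mul]
          push_cast [Nat.cast_sub h.le]
          ring
        rw [this]
        linarith
      linarith
    have expand : ∑ i ∈ Ico K P, s i * (1 - t i) = ∑ i ∈ Ico K P, s i - ∑ i ∈ Ico K P, s i * t i := by
      rw [← Finset.sum_sub_distrib]
      congr 1; ext i; ring
    have pos : 0 ≤ ∑ i ∈ range K, s i * t i - ∑ i ∈ range K, s i * t i := by linarith
    nlinarith [key, expand, Finset.sum_nonneg (fun i (_ : i ∈ range K) => mul_nonneg (hs0 i) (ht0 i))]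

lemma bessel_sq {m q : ℕ} (w : Fin m → EuclideanSpace ℝ (Fin q))
    (hw : Orthonormal ℝ w) (x : EuclideanSpace ℝ (Fin q)) :
    ∑ j : Fin m, (∑ i, w j i * x i) ^ 2 ≤ ∑ i, (x i) ^ 2 := by
  have h := hw.sum_inner_products_le (𝕜 := ℝ) (s := Finset.univ) x
  have hnorm : ‖x‖ ^ 2 = ∑ i, (x i) ^ 2 := by
    rw [EuclideanSpace.norm_eq]
    rw [Real.sq_sqrt (Finset.sum_nonneg fun i _ => sq_nonneg _)]
    simp [Real.norm_eq_abs, sq_abs]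
  have hinner : ∀ j, (inner ℝ (w j) x : ℝ) = ∑ i, w j i * x i := by
    intro j
    rw [PiLp.inner_apply]
    simp [RCLike.inner_apply, conj_trivial]
    exact Finset.sum_congr rfl fun _ _ => mul_comm _ _
  calc ∑ j : Fin m, (∑ i, w j i * x i) ^ 2
      = ∑ j : Fin m, ‖(inner ℝ (w j) x : ℝ)‖ ^ 2 := by
        simp only [hinner, Real.norm_eq_abs, sq_abs]
    _ ≤ ‖x‖ ^ 2 := h
    _ = ∑ i, (x i) ^ 2 := hnorm

lemma sig_mulVec {n p : ℕ} (σ : ℕ → ℝ) (Sig : Matrix (Fin n) (Fin p) ℝ)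
    (hSig : ∀ i j, Sig i j = if (i : ℕ) = (j : ℕ) then σ (i : ℕ) else 0)
    (x : Fin p → ℝ) (i : Fin n) :
    Sig.mulVec x i = if h : (i : ℕ) < p then σ i * x ⟨i, h⟩ else 0 := by
  rw [Matrix.mulVec, dotProduct]
  split_ifs with h
  · rw [Finset.sum_eq_single (⟨i, h⟩ : Fin p)]
    · rw [hSig]; simp
    · intro j _ hj
      rw [hSig]
      have : (i : ℕ) ≠ (j : ℕ) := fun he => hj (by ext; exact he.symm)
      simp [this]
    · simp
  · apply Finset.sum_eq_zero
    intro j _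
    rw [hSig]
    have : (i : ℕ) ≠ (j : ℕ) := fun he => (by omega : ¬ ((i:ℕ) < p)) (he ▸ j.isLt)
    simp [this]

lemma key_ineq (n p k : ℕ) (σ : ℕ → ℝ) (Sig : Matrix (Fin n) (Fin p) ℝ)
    (hSig : ∀ i j, Sig i j = if (i : ℕ) = (j : ℕ) then σ (i : ℕ) else 0)
    (hσ : ∀ i j, i ≤ j → σ j ≤ σ i) (hσ0 : ∀ i, 0 ≤ σ i)
    (C : Matrix (Fin n) (Fin p) ℝ) (hC : C.rank ≤ k) :
    ∑ i ∈ Finset.Ico k (min n p), (σ i) ^ 2 ≤ ∑ i, ∑ j, ((Sig - C) i j) ^ 2 := by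
  classical
  set f : EuclideanSpace ℝ (Fin p) →ₗ[ℝ] EuclideanSpace ℝ (Fin n) := Matrix.toEuclideanLin C with hf
  set K : Submodule ℝ (EuclideanSpace ℝ (Fin p)) := LinearMap.ker f with hK
  set m : ℕ := Module.finrank ℝ K with hm
  -- dimension count
  have hrank : C.rank = Module.finrank ℝ (LinearMap.range f) := by
    rw [hf, Matrix.toEuclideanLin_eq_toLin_orthonormal]
    exact C.rank_eq_finrank_range_toLin _ _
  have hdim : Module.finrank ℝ (LinearMap.range f) + m = p := by
    rw [hm, hK]
    rw [LinearMap.finrank_range_add_finrank_ker f]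
    simp [finrank_euclideanSpace_fin]
  have hmk : p ≤ k + m := by omega
  -- orthonormal basis of the kernel
  let b : OrthonormalBasis (Fin m) ℝ K := stdOrthonormalBasis ℝ K
  let w : Fin m → EuclideanSpace ℝ (Fin p) := fun j => (b j : EuclideanSpace ℝ (Fin p))
  have hw : Orthonormal ℝ w := by
    rw [orthonormal_iff_ite]
    intro i j
    have hb := b.orthonormal
    rw [orthonormal_iff_ite] at hb
    have := hb i j
    rw [← this]
    simp only [w, Submodule.coe_inner]
  have hnormsq : ∀ j, ∑ i : Fin p, (w j i) ^ 2 = 1 := by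
    intro j
    have h1 : ‖w j‖ = 1 := hw.1 j
    have h2 : ‖w j‖ ^ 2 = ∑ i : Fin p, (w j i) ^ 2 := by
      rw [EuclideanSpace.norm_eq, Real.sq_sqrt (Finset.sum_nonneg fun i _ => sq_nonneg _)]
      simp [Real.norm_eq_abs, sq_abs]
    rw [h1] at h2
    simpa using h2.symm
  have hker : ∀ j, C.mulVec (w j) = 0 := by
    intro j
    have h1 : f (w j) = 0 := (b j).2
    have h2 := Matrix.ofLp_toEuclideanLin_apply C (w j)
    rw [← hf, h1] at h2
    simpa using h2.symm
  -- auxiliary sequences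
  set w' : Fin m → ℕ → ℝ := fun j i => if h : i < p then w j ⟨i, h⟩ else 0 with hw'
  set t : ℕ → ℝ := fun i => ∑ j : Fin m, (w' j i) ^ 2 with ht
  set s : ℕ → ℝ := fun i => if i < n then σ i ^ 2 else 0 with hs
  have hs_anti : ∀ i j, i ≤ j → s j ≤ s i := by
    intro i j hij
    simp only [hs]
    split_ifs with h1 h2
    · exact pow_le_pow_left₀ (hσ0 j) (hσ i j hij) 2
    · omega
    · exact sq_nonneg _
    · exact le_refl 0
  have hs0 : ∀ i, 0 ≤ s i := by
    intro i; simp only [hs]; split_ifs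
    · exact sq_nonneg _
    · exact le_refl 0
  have ht0 : ∀ i, 0 ≤ t i := fun i => Finset.sum_nonneg fun j _ => sq_nonneg _
  have ht1 : ∀ i, t i ≤ 1 := by
    intro i
    by_cases h : i < p
    · have := bessel_sq w hw (EuclideanSpace.single ⟨i, h⟩ 1)
      have e1 : ∀ j, (∑ l, w j l * (EuclideanSpace.single (⟨i, h⟩ : Fin p) (1:ℝ)) l) = w j ⟨i, h⟩ := by
        intro j
        simp [EuclideanSpace.single_apply]
      have e2 : ∑ l, ((EuclideanSpace.single (⟨i, h⟩ : Fin p) (1:ℝ)) l) ^ 2 = 1 := by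
        simp [EuclideanSpace.single_apply, Finset.sum_ite_eq']
      rw [e2] at this
      simp only [e1] at this
      calc t i = ∑ j : Fin m, (w j ⟨i, h⟩) ^ 2 := by
            simp only [ht, hw', dif_pos h]
        _ ≤ 1 := this
    · simp only [ht, hw', dif_neg h]
      simp
  have htsum : ∑ i ∈ Finset.range p, t i = (m : ℝ) := by
    simp only [ht]
    rw [Finset.sum_comm]
    have : ∀ j : Fin m, ∑ i ∈ Finset.range p, (w' j i) ^ 2 = 1 := by
      intro j
      rw [← hnormsq j, ← Fin.sum_univ_eq_sum_range (fun i => (w' j i) ^ 2) p]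
      apply Finset.sum_congr rfl
      intro i _
      simp only [hw', dif_pos i.isLt]
    rw [Finset.sum_congr rfl fun j _ => this j]
    simp
  -- per-column expansion
  have hcol : ∀ j, ∑ i : Fin n, (Sig.mulVec (w j) i) ^ 2
      = ∑ i ∈ Finset.range p, s i * (w' j i) ^ 2 := by
    intro j
    have hF : ∀ i : Fin n, (Sig.mulVec (w j) i) ^ 2 = s (i : ℕ) * (w' j (i : ℕ)) ^ 2 := by
      intro i
      rw [sig_mulVec σ Sig hSig]
      by_cases h : (i : ℕ) < p
      · simp only [dif_pos h, hs, hw', if_pos i.isLt, dif_pos h, mul_pow]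
      · simp only [dif_neg h, hs, hw', if_pos i.isLt, dif_neg h]
        ring
    calc ∑ i : Fin n, (Sig.mulVec (w j) i) ^ 2
        = ∑ i : Fin n, s (i : ℕ) * (w' j (i : ℕ)) ^ 2 := Finset.sum_congr rfl fun i _ => hF i
      _ = ∑ i ∈ Finset.range n, s i * (w' j i) ^ 2 :=
          Fin.sum_univ_eq_sum_range (fun i => s i * (w' j i) ^ 2) n
      _ = ∑ i ∈ Finset.range p, s i * (w' j i) ^ 2 := by
          rcases le_total n p with h | h
          · apply Finset.sum_subset (Finset.range_subset_range.mpr h)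
            intro i _ hi
            have : ¬ i < n := by simp at hi; omega
            simp only [hs, if_neg this]
            ring
          · symm
            apply Finset.sum_subset (Finset.range_subset_range.mpr h)
            intro i _ hi
            have : ¬ i < p := by simp at hi; omega
            simp only [hw', dif_neg this]
            ring
  -- Bessel bound per row
  have step1 : ∑ j : Fin m, ∑ i : Fin n, ((Sig - C).mulVec (w j) i) ^ 2
      ≤ ∑ i, ∑ l, ((Sig - C) i l) ^ 2 := by
    rw [Finset.sum_comm]
    apply Finset.sum_le_sum
    intro i _
    have hb := bessel_sq w hw (WithLp.toLp 2 (fun l => (Sig - C) i l : Fin p → ℝ) : EuclideanSpace ℝ (Fin p))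
    calc ∑ j : Fin m, ((Sig - C).mulVec (w j) i) ^ 2
        = ∑ j : Fin m, (∑ l, w j l * (Sig - C) i l) ^ 2 := by
          apply Finset.sum_congr rfl
          intro j _
          rw [Matrix.mulVec, dotProduct]
          congr 1
          exact Finset.sum_congr rfl fun l _ => mul_comm _ _
      _ ≤ ∑ l, ((Sig - C) i l) ^ 2 := hb
  -- assemble
  have hsub : ∑ i ∈ Finset.Ico k (min n p), (σ i) ^ 2 = ∑ i ∈ Finset.Ico k p, s i := by
    rw [Finset.sum_congr rfl (fun i hi => ?_)]
    · apply Finset.sum_subset (Finset.Ico_subset_Ico le_rfl (min_le_right n p))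
      intro i hi hni
      simp only [Finset.mem_Ico] at hi hni
      have : ¬ i < n := by omega
      simp only [hs, if_neg this]
    · simp only [Finset.mem_Ico] at hi
      have : i < n := by omega
      simp only [hs, if_pos this]
  calc ∑ i ∈ Finset.Ico k (min n p), (σ i) ^ 2
      = ∑ i ∈ Finset.Ico k p, s i := hsub
    _ ≤ ∑ i ∈ Finset.range p, s i * t i := by
        apply min_lemma p k s t hs_anti hs0 ht0 ht1
        rw [htsum]
        have : (p : ℝ) ≤ (k : ℝ) + m := by exact_mod_cast hmk
        linarith
    _ = ∑ j : Fin m, ∑ i ∈ Finset.range p, s i * (w' j i) ^ 2 := by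
        rw [Finset.sum_comm]
        apply Finset.sum_congr rfl
        intro i _
        simp only [ht, Finset.mul_sum]
    _ = ∑ j : Fin m, ∑ i : Fin n, (Sig.mulVec (w j) i) ^ 2 :=
        (Finset.sum_congr rfl fun j _ => (hcol j).symm)
    _ = ∑ j : Fin m, ∑ i : Fin n, ((Sig - C).mulVec (w j) i) ^ 2 := by
        apply Finset.sum_congr rfl
        intro j _
        apply Finset.sum_congr rfl
        intro i _
        rw [Matrix.sub_mulVec, hker j]
        simp
    _ ≤ ∑ i, ∑ l, ((Sig - C) i l) ^ 2 := step1

lemma diag_frob {n p : ℕ} (g : ℕ → ℝ) (E : Matrix (Fin n) (Fin p) ℝ)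
    (hE : ∀ i j, E i j = if (i : ℕ) = (j : ℕ) then g (i : ℕ) else 0) :
    ∑ i, ∑ j, (E i j) ^ 2 = ∑ i ∈ Finset.range (min n p), g i ^ 2 := by
  have hrow : ∀ i : Fin n, ∑ j, (E i j) ^ 2 = if (i : ℕ) < p then g (i : ℕ) ^ 2 else 0 := by
    intro i
    split_ifs with h
    · rw [Finset.sum_eq_single (⟨i, h⟩ : Fin p)]
      · rw [hE]; simp
      · intro j _ hj
        rw [hE]
        have : (i : ℕ) ≠ (j : ℕ) := fun he => hj (by ext; exact he.symm)
        simp [this]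
      · simp
    · apply Finset.sum_eq_zero
      intro j _
      rw [hE]
      have : (i : ℕ) ≠ (j : ℕ) := fun he => (by omega : ¬ ((i:ℕ) < p)) (he ▸ j.isLt)
      simp [this]
  calc ∑ i, ∑ j, (E i j) ^ 2
      = ∑ i : Fin n, (if (i : ℕ) < p then g (i : ℕ) ^ 2 else 0) :=
        Finset.sum_congr rfl fun i _ => hrow i
    _ = ∑ i ∈ Finset.range n, (if i < p then g i ^ 2 else 0) :=
        Fin.sum_univ_eq_sum_range (fun i => if i < p then g i ^ 2 else 0) n
    _ = ∑ i ∈ Finset.range (min n p), g i ^ 2 := by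
        rw [← Finset.sum_subset (Finset.range_subset_range.mpr (min_le_left n p))]
        · apply Finset.sum_congr rfl
          intro i hi
          simp only [Finset.mem_range] at hi
          rw [if_pos (by omega)]
        · intro i hi hni
          simp only [Finset.mem_range] at hi hni
          rw [if_neg (by omega)]

/-- Eckart–Young -/
theorem stmt_8 (n p k : ℕ) (X : Matrix (Fin n) (Fin p) ℝ)
    (U : Matrix (Fin n) (Fin n) ℝ) (V : Matrix (Fin p) (Fin p) ℝ)
    (Sig : Matrix (Fin n) (Fin p) ℝ) (σ : ℕ → ℝ)
    (hU : Uᵀ * U = 1) (hV : Vᵀ * V = 1)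
    (hSig : ∀ i j, Sig i j = if (i : ℕ) = (j : ℕ) then σ (i : ℕ) else 0)
    (hσ : ∀ i j, i ≤ j → σ j ≤ σ i) (hσ0 : ∀ i, 0 ≤ σ i)
    (hX : X = U * Sig * Vᵀ) :
    (∀ B : Matrix (Fin n) (Fin p) ℝ, B.rank ≤ k →
        ∑ i ∈ Finset.Ico k (min n p), (σ i) ^ 2 ≤ ∑ i, ∑ j, ((X - B) i j) ^ 2) ∧
      (∃ Xk : Matrix (Fin n) (Fin p) ℝ,
        Xk = U * (Matrix.of fun (i : Fin n) (j : Fin p) =>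
          if (i : ℕ) = (j : ℕ) ∧ (i : ℕ) < k then σ (i : ℕ) else 0) * Vᵀ ∧
        Xk.rank ≤ k ∧
        ∑ i, ∑ j, ((X - Xk) i j) ^ 2 = ∑ i ∈ Finset.Ico k (min n p), (σ i) ^ 2) := by
  have hUU : U * Uᵀ = 1 := mul_eq_one_comm.mp hU
  have hVV : V * Vᵀ = 1 := mul_eq_one_comm.mp hV
  have hconj : ∀ B : Matrix (Fin n) (Fin p) ℝ,
      X - B = U * (Sig - Uᵀ * B * V) * Vᵀ := by
    intro B
    rw [Matrix.mul_sub, Matrix.sub_mul, ← hX]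
    congr 1
    simp only [Matrix.mul_assoc]
    rw [hVV, Matrix.mul_one, ← Matrix.mul_assoc, hUU, Matrix.one_mul]
  constructor
  · intro B hB
    rw [hconj B, frob_conj U V hU hV]
    apply key_ineq n p k σ Sig hSig hσ hσ0
    calc (Uᵀ * B * V).rank ≤ (Uᵀ * B).rank := Matrix.rank_mul_le_left _ _
      _ ≤ B.rank := Matrix.rank_mul_le_right _ _
      _ ≤ k := hB
  · set D : Matrix (Fin n) (Fin p) ℝ := Matrix.of fun (i : Fin n) (j : Fin p) =>
      if (i : ℕ) = (j : ℕ) ∧ (i : ℕ) < k then σ (i : ℕ) else 0 with hD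
    refine ⟨U * D * Vᵀ, rfl, ?_, ?_⟩
    · -- rank bound
      set P : Matrix (Fin n) (Fin k) ℝ := fun i l =>
          if (i : ℕ) = (l : ℕ) then σ (i : ℕ) else 0 with hP
      set Q : Matrix (Fin k) (Fin p) ℝ := fun l j =>
        if (l : ℕ) = (j : ℕ) then 1 else 0 with hQ
      have hfact : D = P * Q := by
        ext i j
        rw [Matrix.mul_apply]
        by_cases hik : (i : ℕ) < k
        · rw [Finset.sum_eq_single (⟨i, hik⟩ : Fin k)]
          · simp only [hD, hP, hQ, Matrix.of_apply]
            by_cases hij : (i : ℕ) = (j : ℕ)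
            · rw [if_pos trivial, if_pos hij, if_pos ⟨hij, hik⟩]
              ring
            · rw [if_pos trivial, if_neg hij, if_neg (fun h => hij h.1)]
              ring
          · intro l _ hl
            have : (i : ℕ) ≠ (l : ℕ) := fun he => hl (by ext; exact he.symm)
            simp only [hP, if_neg this]
            ring
          · simp
        · have h1 : ∀ l : Fin k, P i l * Q l j = 0 := by
            intro l
            have : (i : ℕ) ≠ (l : ℕ) := fun he => hik (he ▸ l.isLt)
            simp only [hP, if_neg this]
            ring
          rw [Finset.sum_eq_zero fun l _ => h1 l]
          simp only [hD, Matrix.of_apply]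
          rw [if_neg (by omega)]
      calc (U * D * Vᵀ).rank ≤ (U * D).rank := Matrix.rank_mul_le_left _ _
        _ ≤ D.rank := Matrix.rank_mul_le_right _ _
        _ ≤ k := by
          rw [hfact]
          calc (P * Q).rank ≤ P.rank := Matrix.rank_mul_le_left _ _
            _ ≤ Fintype.card (Fin k) := P.rank_le_card_width
            _ = k := Fintype.card_fin k
    · -- Frobenius equality
      rw [hconj (U * D * Vᵀ)]
      have hred : Sig - Uᵀ * (U * D * Vᵀ) * V = Sig - D := by
        congr 1
        calc Uᵀ * (U * D * Vᵀ) * V = (Uᵀ * U) * (D * (Vᵀ * V)) := by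
              simp only [Matrix.mul_assoc]
          _ = D := by rw [hU, hV, Matrix.mul_one, Matrix.one_mul]
      rw [hred, frob_conj U V hU hV]
      have hE : ∀ i j, (Sig - D) i j
          = if (i : ℕ) = (j : ℕ) then (if k ≤ (i : ℕ) then σ (i : ℕ) else 0) else 0 := by
        intro i j
        simp only [Matrix.sub_apply, hSig, hD, Matrix.of_apply]
        by_cases h1 : (i : ℕ) = (j : ℕ)
        · by_cases h2 : (i : ℕ) < k
          · rw [if_pos h1, if_pos ⟨h1, h2⟩, if_pos h1, if_neg (by omega)]
            ring
          · rw [if_pos h1, if_neg (by tauto), if_pos h1, if_pos (by omega)]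
            ring
        · rw [if_neg h1, if_neg (by tauto), if_neg h1]
          ring
      rw [diag_frob (fun i => if k ≤ i then σ i else 0) (Sig - D) hE]
      have hz : ∀ i ∈ Finset.range (min n p), i ∉ Finset.Ico k (min n p) →
          (if k ≤ i then σ i else 0) ^ 2 = 0 := by
        intro i hi hni
        simp only [Finset.mem_range] at hi
        simp only [Finset.mem_Ico] at hni
        rw [if_neg (by omega)]
        ring
      rw [← Finset.sum_subset
        (fun i hi => Finset.mem_range.mpr (Finset.mem_Ico.mp hi).2) hz]
      apply Finset.sum_congr rfl
      intro i hi
      rw [if_pos (Finset.mem_Ico.mp hi).1]
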